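/- Let δ > 0 be real, t > 0 and x ≥ 0. Then ∫₀^∞ p_t(x, y) dy = 1, where p_t is the BES(δ) transition density; i.e., p_t(x, ·) is a probability density on (0, ∞) for every dimension δ > 0. -/

import Mathlib

open Real MeasureTheory

/-- Imaginary-argument normalized spherical Bessel function `ĵ_ν(z) = j_ν(iz)`. -/
noncomputable def sphBesselI (ν : ℝ) (z : ℝ) : ℝ :=
  Real.Gamma (ν + 1) *
    ∑' m : ℕ, (z / 2) ^ (2 * m) / (Nat.factorial m * Real.Gamma (ν + m + 1))

/-- Transition density `p_t(x,y)` of the `δ`-dimensional Bessel process BES(δ). -/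
noncomputable def besselDensity (δ t x y : ℝ) : ℝ :=
  2 * y ^ (δ - 1) * (2 * t) ^ (-(δ / 2)) / Real.Gamma (δ / 2) *
    sphBesselI (δ / 2 - 1) (x * y / t) * Real.exp (-(x ^ 2 + y ^ 2) / (2 * t))

/-- `p_t(x, ·)` is a probability density on `(0, ∞)` for every dimension `δ > 0`. -/
theorem besselDensity_integral_one
    (δ : ℝ) (hδ : 0 < δ) (t x : ℝ) (ht : 0 < t) (hx : 0 ≤ x) :
    ∫ y in Set.Ioi (0 : ℝ), besselDensity δ t x y = 1 := by
  have h2t : (0:ℝ) < 2 * t := by linarith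
  have hb : (0:ℝ) < (2*t)⁻¹ := by positivity
  have hΓ : ∀ m : ℕ, 0 < Real.Gamma (δ/2 + m) := fun m => Real.Gamma_pos_of_pos (by positivity)
  have hΓ0 : 0 < Real.Gamma (δ/2) := Real.Gamma_pos_of_pos (by positivity)
  set E : ℝ := Real.exp (-x^2 / (2*t)) with hE
  have hE0 : 0 < E := Real.exp_pos _
  set c : ℕ → ℝ := fun m =>
    2 * (2*t) ^ (-(δ/2)) * E * (x/(2*t))^(2*m) / (m.factorial * Real.Gamma (δ/2 + m)) with hc_def
  have hc : ∀ m, 0 ≤ c m := by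
    intro m
    have h1 : (0:ℝ) ≤ (x/(2*t))^(2*m) := pow_nonneg (by positivity) _
    have h2 := (hΓ m).le
    rw [hc_def]
    positivity
  set F : ℕ → ℝ → ℝ := fun m y =>
    c m * (y ^ (δ - 1 + 2*(m:ℝ)) * Real.exp (-(2*t)⁻¹ * y ^ (2:ℝ))) with hF_def
  -- pointwise identity
  have hpt : Set.EqOn (besselDensity δ t x) (fun y => ∑' m, F m y) (Set.Ioi 0) := by
    intro y hy
    have hy0 : 0 < y := hy
    set C : ℝ := 2 * y ^ (δ - 1) * (2 * t) ^ (-(δ / 2)) / Real.Gamma (δ / 2) *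
      Real.Gamma (δ / 2 - 1 + 1) * Real.exp (-(x ^ 2 + y ^ 2) / (2 * t)) with hC
    have key : ∀ m : ℕ, F m y =
        C * ((x * y / t / 2) ^ (2 * m) / (Nat.factorial m * Real.Gamma (δ / 2 - 1 + m + 1))) := by
      intro m
      have e1 : δ/2 - 1 + 1 = δ/2 := by ring
      have e2 : δ/2 - 1 + (m:ℝ) + 1 = δ/2 + m := by ring
      have e3 : x * y / t / 2 = (x/(2*t)) * y := by
        rw [div_div, mul_comm t 2, div_mul_eq_mul_div]
      have e4 : y ^ (δ - 1 + 2*(m:ℝ)) = y ^ (δ-1) * y ^ (2*m) := by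
        rw [Real.rpow_add hy0, show (2*(m:ℝ)) = ((2*m : ℕ):ℝ) by push_cast; ring,
          Real.rpow_natCast]
      have e5 : y ^ (2:ℝ) = y ^ (2:ℕ) := by
        rw [show ((2:ℝ)) = ((2:ℕ):ℝ) by norm_num, Real.rpow_natCast]
      have e6 : E * Real.exp (-(2*t)⁻¹ * y ^ (2:ℕ)) = Real.exp (-(x^2+y^2)/(2*t)) := by
        rw [hE, ← Real.exp_add]
        congr 1
        field_simp
        ring
      simp only [hF_def, hc_def, hC]
      rw [e1, e2, e3, e4, e5, mul_pow, ← e6]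
      have hΓm := (hΓ m).ne'
      have hfm : ((Nat.factorial m : ℝ)) ≠ 0 := by positivity
      field_simp
    calc besselDensity δ t x y
        = C * ∑' m : ℕ, (x * y / t / 2) ^ (2 * m) /
            (Nat.factorial m * Real.Gamma (δ / 2 - 1 + m + 1)) := by
          rw [besselDensity, sphBesselI, hC]; ring
      _ = ∑' m, F m y := ((tsum_congr key).trans tsum_mul_left).symm
  rw [setIntegral_congr_fun measurableSet_Ioi hpt]
  -- each term's integral
  have hq : ∀ m : ℕ, (-1:ℝ) < δ - 1 + 2*(m:ℝ) := by
    intro m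
    have : (0:ℝ) ≤ (m:ℝ) := Nat.cast_nonneg m
    linarith
  have hval : ∀ m : ℕ, ∫ y in Set.Ioi (0:ℝ), F m y = E * ((x^2/(2*t))^m / m.factorial) := by
    intro m
    rw [hF_def]
    simp only
    rw [MeasureTheory.integral_const_mul,
      integral_rpow_mul_exp_neg_mul_rpow two_pos (hq m) hb,
      show -(δ - 1 + 2*(m:ℝ) + 1)/2 = -(δ/2 + m) by ring,
      show (δ - 1 + 2*(m:ℝ) + 1)/2 = δ/2 + m by ring,
      Real.inv_rpow h2t.le, ← Real.rpow_neg h2t.le, neg_neg,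
      Real.rpow_add h2t, Real.rpow_natCast, hc_def]
    simp only
    have hΓm := (hΓ m).ne'
    have hfm : ((Nat.factorial m : ℝ)) ≠ 0 := by positivity
    have hP : (2*t) ^ (δ/2) ≠ 0 := by positivity
    rw [Real.rpow_neg h2t.le]
    field_simp
    have ht0 : t ≠ 0 := ht.ne'
    simp only [inv_pow, one_div, pow_mul]
    field_simp
    rw [← mul_pow]
    congr 1
    rw [div_mul_eq_mul_div, div_eq_div_iff (by positivity) (by positivity)]
    ring
  -- integrability
  have hF_int : ∀ m : ℕ, Integrable (F m) (volume.restrict (Set.Ioi 0)) := by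
    intro m
    exact (integrableOn_rpow_mul_exp_neg_mul_rpow (hq m) two_pos hb).const_mul (c m)
  have hF_norm : ∀ m : ℕ, ∫ y in Set.Ioi (0:ℝ), ‖F m y‖ = E * ((x^2/(2*t))^m / m.factorial) := by
    intro m
    rw [← hval m]
    refine setIntegral_congr_fun measurableSet_Ioi fun y hy => ?_
    have hy0 : (0:ℝ) < y := hy
    refine Real.norm_of_nonneg (mul_nonneg (hc m) (mul_nonneg ?_ (Real.exp_nonneg _)))
    exact Real.rpow_nonneg hy0.le _
  have hF_sum : Summable fun m : ℕ => ∫ y in Set.Ioi (0:ℝ), ‖F m y‖ := by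
    simp_rw [hF_norm]
    exact (Real.summable_pow_div_factorial (x^2/(2*t))).mul_left E
  rw [← MeasureTheory.integral_tsum_of_summable_integral_norm hF_int hF_sum]
  rw [tsum_congr hval, tsum_mul_left,
    show ∑' m : ℕ, (x^2/(2*t))^m / (Nat.factorial m : ℝ) = Real.exp (x^2/(2*t)) by
      rw [Real.exp_eq_exp_ℝ, NormedSpace.exp_eq_tsum_div],
    hE, ← Real.exp_add,
    show -x^2/(2*t) + x^2/(2*t) = 0 by ring, Real.exp_zero]
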